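/- Let (G,B) be a signed graph with a balancing vertex u, and let H be the graph obtained from (G,B) by splitting u with respect to the (at most two) unbalancing classes at u. Then the cycle matroid M(H) equals the frame matroid F(G,B). -/

import Mathlib

/-! Common definitions: multigraphs, walks, biased graphs, frame matroids. -/

universe u v

structure Multigraph (V : Type u) (E : Type v) where
  inc : E → Sym2 V

namespace Multigraph

variable {V : Type u} {E : Type v}

/-- An edge is a loop if its two endpoints coincide. -/
def IsLoop (G : Multigraph V E) (e : E) : Prop := (G.inc e).IsDiag

/-- The set of links (non-loop edges) incident to a vertex. -/
def delta (G : Multigraph V E) (x : V) : Set E := {e | x ∈ G.inc e ∧ ¬ G.IsLoop e}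

/-- The set of all edges (including loops) incident to a vertex. -/
def deltaPlus (G : Multigraph V E) (x : V) : Set E := {e | x ∈ G.inc e}

/-- The set of vertices incident with an edge of `X`. -/
def VSet (G : Multigraph V E) (X : Set E) : Set V := {x | ∃ e ∈ X, x ∈ G.inc e}

/-- Walks in a multigraph. -/
inductive Walk (G : Multigraph V E) : V → V → Type (max u v) where
  | nil (x : V) : Walk G x x
  | cons {x y z : V} (e : E) (h : G.inc e = s(x, y)) (t : Walk G y z) : Walk G x z

namespace Walk

variable {G : Multigraph V E}

/-- The list of edges of a walk. -/
def edgeList : {x y : V} → G.Walk x y → List E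
  | _, _, .nil _ => []
  | _, _, .cons e _ t => e :: t.edgeList

/-- The list of vertices of a walk (both endpoints included). -/
def vertList : {x y : V} → G.Walk x y → List V
  | _, _, .nil a => [a]
  | a, _, .cons _ _ t => a :: t.vertList

/-- The edge set of a walk. -/
def edgeSet {x y : V} (w : G.Walk x y) : Set E := {e | e ∈ w.edgeList}

/-- A walk is a path if it repeats no vertex. -/
def IsPath {x y : V} (w : G.Walk x y) : Prop := w.vertList.Nodup

/-- A closed walk is a cycle if it is nonempty, repeats no edge and repeats
no vertex except for its starting vertex.  (A loop gives a cycle of length one.) -/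
def IsCycle {x : V} (w : G.Walk x x) : Prop :=
  w.edgeList ≠ [] ∧ w.edgeList.Nodup ∧ w.vertList.dropLast.Nodup

end Walk

/-- `P` is the edge set of a path from `x` to `y`. -/
def IsPathSet (G : Multigraph V E) (x y : V) (P : Set E) : Prop :=
  ∃ w : G.Walk x y, w.IsPath ∧ w.edgeSet = P

/-- `C` is the edge set of a cycle. -/
def IsCycleSet (G : Multigraph V E) (C : Set E) : Prop :=
  ∃ (x : V) (w : G.Walk x x), w.IsCycle ∧ w.edgeSet = C

/-- Two vertices are connected using only edges of `X`. -/
def ConnectedTo (G : Multigraph V E) (X : Set E) (x y : V) : Prop :=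
  ∃ w : G.Walk x y, w.edgeSet ⊆ X

/-- A multigraph is connected if any two vertices are joined by a walk. -/
def ConnectedGraph (G : Multigraph V E) : Prop := ∀ x y : V, Nonempty (G.Walk x y)

/-- The subgraph induced by an edge set `X` is connected. -/
def SubConnected (G : Multigraph V E) (X : Set E) : Prop :=
  ∀ e ∈ X, ∀ f ∈ X, ∃ x y, x ∈ G.inc e ∧ y ∈ G.inc f ∧ G.ConnectedTo X x y

/-- A theta subgraph: two distinct vertices joined by three internally disjoint paths. -/
def IsTheta (G : Multigraph V E) (x y : V) (P₁ P₂ P₃ : Set E) : Prop :=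
  x ≠ y ∧ G.IsPathSet x y P₁ ∧ G.IsPathSet x y P₂ ∧ G.IsPathSet x y P₃ ∧
    Disjoint P₁ P₂ ∧ Disjoint P₂ P₃ ∧ Disjoint P₁ P₃ ∧
    G.VSet P₁ ∩ G.VSet P₂ ⊆ {x, y} ∧ G.VSet P₂ ∩ G.VSet P₃ ⊆ {x, y} ∧
    G.VSet P₁ ∩ G.VSet P₃ ⊆ {x, y}

/-- A proper separation of a multigraph, given as a partition of the edge set:
each side must contain a vertex not met by the other side. -/
def IsProperSep (G : Multigraph V E) (X Y : Set E) : Prop :=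
  X ∪ Y = Set.univ ∧ Disjoint X Y ∧
    (G.VSet X \ G.VSet Y).Nonempty ∧ (G.VSet Y \ G.VSet X).Nonempty

/-- A multigraph is `k`-connected if it is connected and every proper separation
has order at least `k`. -/
def KConnected (G : Multigraph V E) (k : ℕ) : Prop :=
  G.ConnectedGraph ∧ ∀ X Y : Set E, G.IsProperSep X Y → k ≤ (G.VSet X ∩ G.VSet Y).ncard

/-- The connected component of the edge `e` in the subgraph induced by `X`. -/
def edgeComponent (G : Multigraph V E) (X : Set E) (e : E) : Set E :=
  {f | f ∈ X ∧ ∃ x y, x ∈ G.inc e ∧ y ∈ G.inc f ∧ G.ConnectedTo X x y}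

/-- The set of connected components (as edge sets) of the subgraph induced by `X`. -/
def components (G : Multigraph V E) (X : Set E) : Set (Set E) :=
  {D | ∃ e ∈ X, D = G.edgeComponent X e}

/-- One step of rerouting a `u`-`v` path: replace a subpath `R` (with endpoints `x,y`)
of `P` by an `x`-`y` path `Q` that is internally disjoint from `P`. -/
def RerouteStep (G : Multigraph V E) (u v : V) (P P' : Set E) : Prop :=
  G.IsPathSet u v P ∧ G.IsPathSet u v P' ∧
    ∃ x y R Q, G.IsPathSet x y R ∧ G.IsPathSet x y Q ∧ R ⊆ P ∧
      Disjoint Q (P \ R) ∧ G.VSet Q ∩ G.VSet P ⊆ {x, y} ∧ P' = (P \ R) ∪ Q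

end Multigraph

/-- A biased graph: a multigraph together with a collection of balanced cycles
satisfying the theta property. -/
structure BiasedGraph (V : Type u) (E : Type v) extends Multigraph V E where
  Balanced : Set E → Prop
  balanced_isCycle : ∀ C, Balanced C → toMultigraph.IsCycleSet C
  theta_property : ∀ x y P₁ P₂ P₃, toMultigraph.IsTheta x y P₁ P₂ P₃ →
    Balanced (P₁ ∪ P₂) → Balanced (P₂ ∪ P₃) → Balanced (P₁ ∪ P₃)

namespace BiasedGraph

variable {V : Type u} {E : Type v}

/-- A balancing vertex: every unbalanced cycle passes through it. -/
def BalancingVertex (Ω : BiasedGraph V E) (u : V) : Prop :=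
  ∀ C, Ω.toMultigraph.IsCycleSet C → ¬ Ω.Balanced C → ∃ e ∈ C, u ∈ Ω.inc e

/-- `C` is an unbalanced cycle of `Ω`. -/
def IsUnbalancedCycle (Ω : BiasedGraph V E) (C : Set E) : Prop :=
  Ω.toMultigraph.IsCycleSet C ∧ ¬ Ω.Balanced C

/-- Every cycle contained in `X` is balanced. -/
def BalancedSub (Ω : BiasedGraph V E) (X : Set E) : Prop :=
  ∀ C ⊆ X, Ω.toMultigraph.IsCycleSet C → Ω.Balanced C

/-- `e ~ f`: either `e = f` or some balanced cycle contains both. -/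
def LinkRel (Ω : BiasedGraph V E) (e f : E) : Prop :=
  e = f ∨ ∃ C, Ω.toMultigraph.IsCycleSet C ∧ Ω.Balanced C ∧ e ∈ C ∧ f ∈ C

/-- The same relation, with the balanced cycle restricted to lie inside `A`. -/
def LinkRelIn (Ω : BiasedGraph V E) (A : Set E) (e f : E) : Prop :=
  e = f ∨ ∃ C, C ⊆ A ∧ Ω.toMultigraph.IsCycleSet C ∧ Ω.Balanced C ∧ e ∈ C ∧ f ∈ C

/-- `S` is an unbalancing class of `delta u`: a (nonempty) equivalence class of `~`. -/
def IsUnbalancingClass (Ω : BiasedGraph V E) (u : V) (S : Set E) : Prop :=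
  S.Nonempty ∧ S ⊆ Ω.toMultigraph.delta u ∧
    ∀ e ∈ S, ∀ f ∈ Ω.toMultigraph.delta u, (f ∈ S ↔ Ω.LinkRel e f)

/-- `delta u` has exactly three unbalancing classes within the edge set `A`. -/
def HasThreeClassesIn (Ω : BiasedGraph V E) (u : V) (A : Set E) : Prop :=
  ∃ e₁ e₂ e₃, e₁ ∈ Ω.toMultigraph.delta u ∩ A ∧ e₂ ∈ Ω.toMultigraph.delta u ∩ A ∧
    e₃ ∈ Ω.toMultigraph.delta u ∩ A ∧
    ¬ Ω.LinkRelIn A e₁ e₂ ∧ ¬ Ω.LinkRelIn A e₁ e₃ ∧ ¬ Ω.LinkRelIn A e₂ e₃ ∧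
    ∀ f ∈ Ω.toMultigraph.delta u ∩ A,
      Ω.LinkRelIn A f e₁ ∨ Ω.LinkRelIn A f e₂ ∨ Ω.LinkRelIn A f e₃

/-- Tight handcuffs: two unbalanced cycles meeting in exactly one vertex. -/
def IsTightHandcuff (Ω : BiasedGraph V E) (X : Set E) : Prop :=
  ∃ C₁ C₂, Ω.IsUnbalancedCycle C₁ ∧ Ω.IsUnbalancedCycle C₂ ∧ Disjoint C₁ C₂ ∧
    (∃ x, Ω.toMultigraph.VSet C₁ ∩ Ω.toMultigraph.VSet C₂ = {x}) ∧ X = C₁ ∪ C₂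

/-- Loose handcuffs: two vertex-disjoint unbalanced cycles joined by a path meeting
each cycle only in an endpoint. -/
def IsLooseHandcuff (Ω : BiasedGraph V E) (X : Set E) : Prop :=
  ∃ C₁ C₂ P x y, Ω.IsUnbalancedCycle C₁ ∧ Ω.IsUnbalancedCycle C₂ ∧
    Disjoint (Ω.toMultigraph.VSet C₁) (Ω.toMultigraph.VSet C₂) ∧
    Ω.toMultigraph.IsPathSet x y P ∧ Disjoint P (C₁ ∪ C₂) ∧
    Ω.toMultigraph.VSet P ∩ Ω.toMultigraph.VSet C₁ = {x} ∧
    Ω.toMultigraph.VSet P ∩ Ω.toMultigraph.VSet C₂ = {y} ∧ X = C₁ ∪ C₂ ∪ P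

/-- A contrabalanced theta: a theta subgraph all three of whose cycles are unbalanced. -/
def IsContraTheta (Ω : BiasedGraph V E) (X : Set E) : Prop :=
  ∃ x y P₁ P₂ P₃, Ω.toMultigraph.IsTheta x y P₁ P₂ P₃ ∧
    ¬ Ω.Balanced (P₁ ∪ P₂) ∧ ¬ Ω.Balanced (P₂ ∪ P₃) ∧ ¬ Ω.Balanced (P₁ ∪ P₃) ∧
    X = P₁ ∪ P₂ ∪ P₃

/-- The circuits of the frame matroid of a biased graph. -/
def FrameCircuit (Ω : BiasedGraph V E) (X : Set E) : Prop :=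
  (Ω.toMultigraph.IsCycleSet X ∧ Ω.Balanced X) ∨ Ω.IsTightHandcuff X ∨
    Ω.IsLooseHandcuff X ∨ Ω.IsContraTheta X

/-- The number of balanced components of the subgraph induced by `X`. -/
noncomputable def numBalComponents (Ω : BiasedGraph V E) (X : Set E) : ℕ :=
  {D | D ∈ Ω.toMultigraph.components X ∧ Ω.BalancedSub D}.ncard

end BiasedGraph

section MatroidDefs

variable {α : Type*}

/-- A circuit of a matroid: a minimal dependent set. -/
def MCircuit (M : Matroid α) (C : Set α) : Prop :=
  C ⊆ M.E ∧ ¬ M.Indep C ∧ ∀ D ⊂ C, M.Indep D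

/-- A hyperplane: a maximal proper flat. -/
def MHyperplane (M : Matroid α) (H : Set α) : Prop :=
  M.IsFlat H ∧ H ≠ M.E ∧ ∀ F, M.IsFlat F → H ⊆ F → F = H ∨ F = M.E

/-- A cocircuit: a circuit of the dual matroid. -/
def MCocircuit (M : Matroid α) (K : Set α) : Prop := MCircuit (Matroid.dual M) K

open scoped Matroid in
/-- Deletion of a set of elements. -/
def MDelete (M : Matroid α) (D : Set α) : Matroid α := M ↾ (M.E \ D)

/-- Contraction of a set of elements. -/
def MContract (M : Matroid α) (C : Set α) : Matroid α :=
  Matroid.dual (MDelete (Matroid.dual M) C)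

/-- `N` is a minor of `M`. -/
def IsMinorOf (N M : Matroid α) : Prop := ∃ C D, N = MDelete (MContract M C) D

/-- The rank of a set in a matroid (junk value if unbounded). -/
noncomputable def mRank (M : Matroid α) (X : Set α) : ℕ :=
  sSup {n : ℕ | ∃ I, M.Indep I ∧ I ⊆ X ∧ I.ncard = n}

/-- A matroid is connected if any two elements lie on a common circuit. -/
def MatroidConnected (M : Matroid α) : Prop :=
  M.E.Nonempty ∧ ∀ e ∈ M.E, ∀ f ∈ M.E, e = f ∨ ∃ C, MCircuit M C ∧ e ∈ C ∧ f ∈ C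

/-- A `k`-separation of a matroid. -/
def MatroidKSeparation (M : Matroid α) (X Y : Set α) (k : ℕ) : Prop :=
  X ∪ Y = M.E ∧ Disjoint X Y ∧ k ≤ X.ncard ∧ k ≤ Y.ncard ∧
    mRank M X + mRank M Y + 1 = mRank M M.E + k

/-- A matroid is 3-connected if it has no `k`-separation for `k < 3`. -/
def Matroid3Connected (M : Matroid α) : Prop :=
  ∀ X Y (k : ℕ), k ≤ 2 → ¬ MatroidKSeparation M X Y k

/-- A matroid is graphic if its circuits are exactly the cycles of some multigraph. -/
def IsGraphic (M : Matroid α) : Prop :=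
  ∃ (W : Type) (G : Multigraph W α), ∀ C, MCircuit M C ↔ G.IsCycleSet C

/-- A matroid has a `U_{2,4}` minor. -/
def HasU24Minor (M : Matroid α) : Prop :=
  ∃ N : Matroid α, IsMinorOf N M ∧ N.E.ncard = 4 ∧
    ∀ C, MCircuit N C ↔ C ⊆ N.E ∧ C.ncard = 3

end MatroidDefs

/-- `M` is the frame matroid of the biased graph `Ω` (on ground set all of `E`). -/
def IsFrameMatroidOf {V E : Type*} (M : Matroid E) (Ω : BiasedGraph V E) : Prop :=
  M.E = Set.univ ∧ ∀ C, MCircuit M C ↔ Ω.FrameCircuit C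

open scoped Matroid in
/-- A vertex is committed: the complement of its edge star is a connected
nongraphic hyperplane of the frame matroid. -/
def BiasedGraph.IsCommitted {V E : Type*} (Ω : BiasedGraph V E) (M : Matroid E) (x : V) : Prop :=
  MHyperplane M (Ω.toMultigraph.deltaPlus x)ᶜ ∧
    MatroidConnected (M ↾ (Ω.toMultigraph.deltaPlus x)ᶜ) ∧
    ¬ IsGraphic (M ↾ (Ω.toMultigraph.deltaPlus x)ᶜ)

/-- `Ω'` is a roll-up of `Ω` at the balancing vertex `u`: some (possibly empty)
unbalancing class of links at `u` is replaced by unbalanced loops at their other endpoints. -/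
def BiasedGraph.IsRollUpOf {V E : Type*} (Ω' Ω : BiasedGraph V E) (u : V) : Prop :=
  ∃ S : Set E, (S = ∅ ∨ Ω.IsUnbalancingClass u S) ∧
    (∀ e ∉ S, Ω'.inc e = Ω.inc e) ∧
    (∀ e ∈ S, ∃ w, w ≠ u ∧ Ω.inc e = s(u, w) ∧ Ω'.inc e = s(w, w)) ∧
    (∀ C, Ω'.Balanced C ↔ (Ω.Balanced C ∧ C ∩ S = ∅))


/-! ### Auxiliary development for stmt5 -/

namespace Multigraph
namespace Walk

open List

variable {V : Type u} {E : Type v} {G : Multigraph V E}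

@[simp] lemma vertList_nil (x : V) : (Walk.nil (G := G) x).vertList = [x] := rfl

@[simp] lemma vertList_cons {x y z : V} (e : E) (h : G.inc e = s(x, y)) (t : G.Walk y z) :
    (Walk.cons e h t).vertList = x :: t.vertList := rfl

@[simp] lemma edgeList_nil (x : V) : (Walk.nil (G := G) x).edgeList = [] := rfl

@[simp] lemma edgeList_cons {x y z : V} (e : E) (h : G.inc e = s(x, y)) (t : G.Walk y z) :
    (Walk.cons e h t).edgeList = e :: t.edgeList := rfl

lemma vertList_ne_nil : ∀ {x y : V} (w : G.Walk x y), w.vertList ≠ []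
  | _, _, .nil _ => by simp [vertList]
  | _, _, .cons _ _ _ => by simp [vertList]

lemma vertList_eq_cons : ∀ {x y : V} (w : G.Walk x y), ∃ l, w.vertList = x :: l
  | _, _, .nil _ => ⟨[], rfl⟩
  | _, _, .cons _ _ t => ⟨t.vertList, rfl⟩

lemma start_mem_vertList {x y : V} (w : G.Walk x y) : x ∈ w.vertList := by
  obtain ⟨l, hl⟩ := w.vertList_eq_cons; rw [hl]; exact List.mem_cons_self

lemma getLast?_vertList : ∀ {x y : V} (w : G.Walk x y), w.vertList.getLast? = some y
  | _, _, .nil x => rfl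
  | _, _, .cons _ _ t => by
      obtain ⟨l, hl⟩ := t.vertList_eq_cons
      rw [vertList_cons, hl, List.getLast?_cons_cons, ← hl]
      exact getLast?_vertList t

lemma getLast_vertList {x y : V} (w : G.Walk x y) :
    w.vertList.getLast (vertList_ne_nil w) = y := by
  have := getLast?_vertList w
  rwa [List.getLast?_eq_getLast (vertList_ne_nil w), Option.some_inj] at this

lemma vertList_eq_dropLast_append {x y : V} (w : G.Walk x y) :
    w.vertList = w.vertList.dropLast ++ [y] := by
  conv_lhs => rw [← List.dropLast_append_getLast (vertList_ne_nil w)]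
  rw [getLast_vertList]

lemma end_mem_vertList {x y : V} (w : G.Walk x y) : y ∈ w.vertList := by
  rw [vertList_eq_dropLast_append]; simp

/-- Concatenation of walks. -/
def append : {x y z : V} → G.Walk x y → G.Walk y z → G.Walk x z
  | _, _, _, .nil _, q => q
  | _, _, _, .cons e h t, q => .cons e h (t.append q)

@[simp] lemma edgeList_append : ∀ {x y z : V} (p : G.Walk x y) (q : G.Walk y z),
    (p.append q).edgeList = p.edgeList ++ q.edgeList
  | _, _, _, .nil _, q => rfl
  | _, _, _, .cons e h t, q => by
      simp [append, edgeList, edgeList_append t q]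

lemma vertList_append : ∀ {x y z : V} (p : G.Walk x y) (q : G.Walk y z),
    (p.append q).vertList = p.vertList.dropLast ++ q.vertList
  | _, _, _, .nil _, q => rfl
  | _, _, _, .cons e h t, q => by
      simp only [append, vertList, vertList_append t q]
      rw [List.dropLast_cons_of_ne_nil (vertList_ne_nil t)]
      rfl

@[simp] lemma mem_edgeSet {x y : V} (w : G.Walk x y) (e : E) :
    e ∈ w.edgeSet ↔ e ∈ w.edgeList := Iff.rfl

lemma edgeSet_append {x y z : V} (p : G.Walk x y) (q : G.Walk y z) :
    (p.append q).edgeSet = p.edgeSet ∪ q.edgeSet := by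
  ext e; simp [edgeSet, edgeList_append]

/-- Reversal of a walk. -/
def reverse : {x y : V} → G.Walk x y → G.Walk y x
  | _, _, .nil x => .nil x
  | _, _, .cons e h t => t.reverse.append (.cons e (h.trans (Sym2.eq_swap)) (.nil _))

@[simp] lemma edgeList_reverse : ∀ {x y : V} (w : G.Walk x y),
    w.reverse.edgeList = w.edgeList.reverse
  | _, _, .nil _ => rfl
  | _, _, .cons e h t => by
      simp [reverse, edgeList_append, edgeList_reverse t, edgeList]

@[simp] lemma vertList_reverse : ∀ {x y : V} (w : G.Walk x y),
    w.reverse.vertList = w.vertList.reverse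
  | _, _, .nil _ => rfl
  | _, _, .cons e h t => by
      rw [reverse, vertList_append, vertList_reverse t]
      obtain ⟨l, hl⟩ := t.vertList_eq_cons
      rw [hl]
      simp [hl]

lemma edgeSet_reverse {x y : V} (w : G.Walk x y) : w.reverse.edgeSet = w.edgeSet := by
  ext e; simp [edgeSet]

lemma mem_vertList_of_mem_inc : ∀ {x y : V} (w : G.Walk x y) (e : E) (v : V),
    e ∈ w.edgeList → v ∈ G.inc e → v ∈ w.vertList
  | _, _, .nil _, e, v, he, _ => by simp [edgeList] at he
  | x, _, .cons f h t, e, v, he, hv => by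
      rw [edgeList, List.mem_cons] at he
      rcases he with rfl | he
      · rw [h, Sym2.mem_iff] at hv
        rcases hv with rfl | rfl
        · exact start_mem_vertList _
        · rw [vertList]; exact List.mem_cons_of_mem _ (start_mem_vertList t)
      · rw [vertList]; exact List.mem_cons_of_mem _ (mem_vertList_of_mem_inc t e v he hv)

lemma vertList_subset_VSet : ∀ {x y : V} (w : G.Walk x y), w.edgeList ≠ [] →
    ∀ v ∈ w.vertList, v ∈ G.VSet w.edgeSet
  | _, _, .nil _, hne, _, _ => by simp [edgeList] at hne
  | x, _, .cons f h t, _, v, hv => by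
      have hf : f ∈ (Walk.cons f h t).edgeSet := by simp [edgeSet, edgeList]
      rw [vertList, List.mem_cons] at hv
      rcases hv with rfl | hv
      · exact ⟨f, hf, by rw [h]; simp⟩
      · rcases t with _ | ⟨g, hg, t'⟩
        · simp only [vertList, List.mem_singleton] at hv
          subst hv
          exact ⟨f, hf, by rw [h]; simp⟩
        · obtain ⟨e', he', hve⟩ :=
            vertList_subset_VSet (Walk.cons g hg t') (by simp [edgeList]) v hv
          exact ⟨e', by simp [edgeSet, edgeList] at he' ⊢; exact Or.inr he', hve⟩

lemma VSet_subset_vertList {x y : V} (w : G.Walk x y) :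
    ∀ v ∈ G.VSet w.edgeSet, v ∈ w.vertList := by
  rintro v ⟨e, he, hv⟩
  exact mem_vertList_of_mem_inc w e v he hv

/-- Paths (nodup vertList) have nodup edge lists. -/
lemma edgeList_nodup_of_vertList_nodup : ∀ {x y : V} (w : G.Walk x y),
    w.vertList.Nodup → w.edgeList.Nodup
  | _, _, .nil _, _ => by simp [edgeList]
  | x, _, .cons f h t, hnd => by
      rw [vertList, List.nodup_cons] at hnd
      rw [edgeList, List.nodup_cons]
      refine ⟨fun hf => hnd.1 ?_, edgeList_nodup_of_vertList_nodup t hnd.2⟩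
      exact mem_vertList_of_mem_inc t f x hf (by rw [h]; simp)

lemma no_loop_of_vertList_nodup : ∀ {x y : V} (w : G.Walk x y),
    w.vertList.Nodup → ∀ e ∈ w.edgeList, ¬ G.IsLoop e
  | _, _, .nil _, _, e, he, hl => by simp [edgeList] at he
  | x, _, .cons f h t, hnd, e, he, hl => by
      rw [vertList, List.nodup_cons] at hnd
      rw [edgeList, List.mem_cons] at he
      rcases he with rfl | he
      · rw [IsLoop, h, Sym2.mk_isDiag_iff] at hl
        exact hnd.1 (hl ▸ start_mem_vertList t)
      · exact no_loop_of_vertList_nodup t hnd.2 e he hl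

end Walk
end Multigraph

namespace Multigraph
namespace Walk

open List

variable {V : Type u} {E : Type v} {G : Multigraph V E}

lemma edgeList_ne_nil_of_ne : ∀ {x y : V}, x ≠ y → (w : G.Walk x y) → w.edgeList ≠ []
  | _, _, hxy, .nil _ => absurd rfl hxy
  | _, _, _, .cons _ _ _ => by simp

lemma end_not_mem_dropLast {x y : V} (w : G.Walk x y) (hnd : w.vertList.Nodup) :
    y ∉ w.vertList.dropLast := by
  have h := vertList_eq_dropLast_append w
  rw [h, List.nodup_append] at hnd
  intro hy
  exact hnd.2.2 y hy y (List.mem_singleton_self y) rfl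

lemma start_not_mem_tail {x y : V} (w : G.Walk x y) (hnd : w.vertList.Nodup) :
    x ∉ w.vertList.tail := by
  obtain ⟨l, hl⟩ := w.vertList_eq_cons
  rw [hl, List.nodup_cons] at hnd
  rw [hl]
  exact hnd.1

section TakeUntil

variable [DecidableEq V]

/-- The portion of a walk up to the first occurrence of `v`. -/
def takeUntil : {x y : V} → (w : G.Walk x y) → (v : V) → v ∈ w.vertList → G.Walk x v
  | x, _, .nil _, v, h => (show x = v by simpa using (by simpa using h : v = x).symm) ▸ .nil x
  | x, _, .cons e he t, v, h =>
      if hx : x = v then hx ▸ .nil x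
      else .cons e he (t.takeUntil v (by
        rcases List.mem_cons.mp h with h' | h'
        · exact absurd h'.symm hx
        · exact h'))

/-- The portion of a walk from the first occurrence of `v` on. -/
def dropUntil : {x y : V} → (w : G.Walk x y) → (v : V) → v ∈ w.vertList → G.Walk v y
  | x, _, .nil _, v, h => (show x = v by simpa using (by simpa using h : v = x).symm) ▸ .nil x
  | x, y, .cons e he t, v, h =>
      if hx : x = v then hx ▸ .cons e he t
      else t.dropUntil v (by
        rcases List.mem_cons.mp h with h' | h'
        · exact absurd h'.symm hx
        · exact h')

lemma take_append_drop : ∀ {x y : V} (w : G.Walk x y) (v : V) (h : v ∈ w.vertList),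
    (w.takeUntil v h).append (w.dropUntil v h) = w
  | x, _, .nil _, v, h => by
      have hv : v = x := by simpa using h
      subst hv
      rfl
  | x, _, .cons e he t, v, h => by
      by_cases hx : x = v
      · subst hx
        simp [takeUntil, dropUntil, append]
      · simp only [takeUntil, dropUntil, dif_neg hx]
        show Walk.cons e he _ = _
        rw [take_append_drop t v _]

lemma not_mem_dropLast_takeUntil : ∀ {x y : V} (w : G.Walk x y) (v : V) (h : v ∈ w.vertList),
    v ∉ (w.takeUntil v h).vertList.dropLast
  | x, _, .nil _, v, h => by
      have hv : v = x := by simpa using h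
      subst hv
      simp [takeUntil]
  | x, _, .cons e he t, v, h => by
      by_cases hx : x = v
      · subst hx
        simp [takeUntil]
      · simp only [takeUntil, dif_neg hx]
        rw [vertList_cons, List.dropLast_cons_of_ne_nil (vertList_ne_nil _)]
        rw [List.mem_cons]
        rintro (rfl | hmem)
        · exact hx rfl
        · exact not_mem_dropLast_takeUntil t v _ hmem

end TakeUntil

lemma mem_vertList_append {x y z : V} (p : G.Walk x y) (q : G.Walk y z) (v : V) :
    v ∈ (p.append q).vertList ↔ v ∈ p.vertList ∨ v ∈ q.vertList := by
  rw [vertList_append]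
  constructor
  · intro h
    rcases List.mem_append.mp h with h | h
    · exact Or.inl ((List.dropLast_sublist _).mem h)
    · exact Or.inr h
  · rintro (h | h)
    · rw [vertList_eq_dropLast_append p] at h
      rcases List.mem_append.mp h with h | h
      · exact List.mem_append.mpr (Or.inl h)
      · simp only [List.mem_singleton] at h
        subst h
        exact List.mem_append.mpr (Or.inr (start_mem_vertList q))
    · exact List.mem_append.mpr (Or.inr h)

lemma dropLast_vertList_append {x y z : V} (p : G.Walk x y) (q : G.Walk y z) :
    (p.append q).vertList.dropLast = p.vertList.dropLast ++ q.vertList.dropLast := by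
  obtain ⟨l, hl⟩ := q.vertList_eq_cons
  rw [vertList_append, hl, List.dropLast_append_cons, ← hl]

section Rotate

variable [DecidableEq V]

/-- Rotation of a closed walk to a new base vertex. -/
def rotate {x v : V} (w : G.Walk x x) (h : v ∈ w.vertList) : G.Walk v v :=
  (w.dropUntil v h).append (w.takeUntil v h)

lemma edgeList_rotate_perm {x v : V} (w : G.Walk x x) (h : v ∈ w.vertList) :
    (w.rotate h).edgeList.Perm w.edgeList := by
  conv_rhs => rw [← take_append_drop w v h]
  rw [rotate, edgeList_append, edgeList_append]
  exact List.perm_append_comm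

lemma edgeSet_rotate {x v : V} (w : G.Walk x x) (h : v ∈ w.vertList) :
    (w.rotate h).edgeSet = w.edgeSet := by
  ext e
  simp only [mem_edgeSet]
  exact (edgeList_rotate_perm w h).mem_iff

lemma mem_vertList_rotate {x v : V} (w : G.Walk x x) (h : v ∈ w.vertList) (v' : V) :
    v' ∈ (w.rotate h).vertList ↔ v' ∈ w.vertList := by
  conv_rhs => rw [← take_append_drop w v h]
  rw [rotate, mem_vertList_append, mem_vertList_append, or_comm]

lemma isCycle_rotate {x v : V} {w : G.Walk x x} (hc : w.IsCycle) (h : v ∈ w.vertList) :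
    (w.rotate h).IsCycle := by
  obtain ⟨hne, hnd, hvd⟩ := hc
  have hperm := edgeList_rotate_perm w h
  refine ⟨fun h0 => hne (List.eq_nil_of_length_eq_zero ?_), hperm.nodup_iff.mpr hnd, ?_⟩
  · rw [← hperm.length_eq, h0]; rfl
  · have hw : w.vertList.dropLast
        = (w.takeUntil v h).vertList.dropLast ++ (w.dropUntil v h).vertList.dropLast := by
      conv_lhs => rw [← take_append_drop w v h]
      exact dropLast_vertList_append _ _
    have hr : (w.rotate h).vertList.dropLast
        = (w.dropUntil v h).vertList.dropLast ++ (w.takeUntil v h).vertList.dropLast :=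
      dropLast_vertList_append _ _
    rw [hr]
    rw [hw] at hvd
    exact List.nodup_append_comm.mp hvd

end Rotate

lemma IsCycle.exists_cons {x : V} {w : G.Walk x x} (hc : w.IsCycle) :
    ∃ (m : V) (e : E) (he : G.inc e = s(x, m)) (t : G.Walk m x), w = .cons e he t := by
  cases w with
  | nil => exact absurd rfl hc.1
  | cons e he t => exact ⟨_, e, he, t, rfl⟩

lemma IsCycle.tail_nodup {x : V} {w : G.Walk x x} (hc : w.IsCycle) :
    w.vertList.tail.Nodup := by
  obtain ⟨m, e, he, t, rfl⟩ := hc.exists_cons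
  obtain ⟨-, -, hvd⟩ := hc
  rw [vertList_cons, List.dropLast_cons_of_ne_nil (vertList_ne_nil t), List.nodup_cons] at hvd
  show t.vertList.Nodup
  rw [vertList_eq_dropLast_append t, List.nodup_append]
  exact ⟨hvd.2, List.nodup_singleton x, by
    intro a ha b hax hab
    rw [List.mem_singleton] at hax
    subst hax
    subst hab
    exact hvd.1 ha⟩

lemma IsCycle.start_mem_dropLast {x : V} {w : G.Walk x x} (hc : w.IsCycle) :
    x ∈ w.vertList.dropLast := by
  obtain ⟨m, e, he, t, rfl⟩ := hc.exists_cons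
  rw [vertList_cons, List.dropLast_cons_of_ne_nil (vertList_ne_nil t)]
  exact List.mem_cons_self

lemma IsCycle.loop_or_loopfree {x : V} {w : G.Walk x x} (hc : w.IsCycle) :
    (∃ e, w.edgeList = [e] ∧ G.IsLoop e) ∨ ∀ e ∈ w.edgeList, ¬ G.IsLoop e := by
  obtain ⟨m, e, he, t, rfl⟩ := hc.exists_cons
  have htn : t.vertList.Nodup := hc.tail_nodup
  by_cases hl : G.IsLoop e
  · left
    have hxm : x = m := by
      have := hl
      rw [IsLoop, he, Sym2.mk_isDiag_iff] at this
      exact this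
    subst hxm
    cases t with
    | nil => exact ⟨e, rfl, hl⟩
    | cons f hf t' =>
        exfalso
        have hx : x ∈ t'.vertList := by
          have hmem : x ∈ t'.vertList.dropLast ++ [x] := by simp
          rwa [← vertList_eq_dropLast_append t'] at hmem
        rw [vertList_cons, List.nodup_cons] at htn
        exact htn.1 hx
  · right
    intro f hf
    rw [edgeList_cons, List.mem_cons] at hf
    rcases hf with rfl | hf
    · exact hl
    · exact no_loop_of_vertList_nodup t htn f hf

lemma countP_tail_eq_countP_dropLast {x : V} (w : G.Walk x x) (p : V → Bool) :
    w.vertList.tail.countP p = w.vertList.dropLast.countP p := by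
  obtain ⟨l, hl⟩ := w.vertList_eq_cons
  have h2 := vertList_eq_dropLast_append w
  have hcnt : (x :: l).countP p = (w.vertList.dropLast ++ [x]).countP p := by
    rw [← hl, ← h2]
  have h3 : w.vertList.tail = l := by rw [hl]; rfl
  rw [h3]
  simp only [List.countP_cons, List.countP_append, List.countP_nil] at hcnt ⊢
  omega

lemma countP_eq_one_of_nodup_mem {α : Type*} [DecidableEq α] {l : List α} (hnd : l.Nodup)
    {a : α} (ha : a ∈ l) : l.countP (fun c => decide (c = a)) = 1 := by
  induction l with
  | nil => simp at ha
  | cons b l ih =>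
      rw [List.countP_cons]
      rw [List.nodup_cons] at hnd
      rcases List.mem_cons.mp ha with rfl | ha'
      · have h0 : l.countP (fun c => decide (c = a)) = 0 := by
          rw [List.countP_eq_zero]
          intro c hc
          simp only [decide_eq_true_eq]
          rintro rfl
          exact hnd.1 hc
        simp [h0]
      · have hba : b ≠ a := by rintro rfl; exact hnd.1 ha'
        simp [ih hnd.2 ha', hba]

lemma IsCycle.countP_dropLast_eq_one [DecidableEq V] {x v : V} {w : G.Walk x x}
    (hc : w.IsCycle) (hv : v ∈ w.vertList) :
    w.vertList.dropLast.countP (fun c => decide (c = v)) = 1 := by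
  have hmem : v ∈ w.vertList.dropLast := by
    rw [vertList_eq_dropLast_append w, List.mem_append] at hv
    rcases hv with h | h
    · exact h
    · rw [List.mem_singleton] at h
      subst h
      exact hc.start_mem_dropLast
  exact countP_eq_one_of_nodup_mem hc.2.2 hmem

lemma dropLast_reverse_vertList {x y : V} (w : G.Walk x y) :
    w.reverse.vertList.dropLast = w.vertList.tail.reverse := by
  rw [vertList_reverse]
  obtain ⟨l, hl⟩ := w.vertList_eq_cons
  rw [hl]
  simp

/-- Combining two internally disjoint paths into a cycle. -/
lemma combine {x y : V} (p q : G.Walk x y) (hxy : x ≠ y)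
    (hpv : p.vertList.Nodup) (hqv : q.vertList.Nodup)
    (hpe : p.edgeList.Nodup) (hqe : q.edgeList.Nodup)
    (hdisj : ∀ e ∈ p.edgeList, e ∉ q.edgeList)
    (hcross : ∀ c ∈ p.vertList, c ∈ q.vertList → c = x ∨ c = y) :
    ∃ w : G.Walk x x, w.IsCycle ∧ w.edgeSet = p.edgeSet ∪ q.edgeSet := by
  refine ⟨p.append q.reverse, ⟨?_, ?_, ?_⟩, ?_⟩
  · rw [edgeList_append]
    intro h0
    exact edgeList_ne_nil_of_ne hxy p (List.append_eq_nil_iff.mp h0).1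
  · rw [edgeList_append, List.nodup_append]
    refine ⟨hpe, by rw [edgeList_reverse]; exact List.nodup_reverse.mpr hqe, ?_⟩
    intro a ha b hb
    rw [edgeList_reverse, List.mem_reverse] at hb
    exact fun hab => hdisj a ha (hab ▸ hb)
  · rw [dropLast_vertList_append, dropLast_reverse_vertList, List.nodup_append]
    refine ⟨hpv.sublist (List.dropLast_sublist _), List.nodup_reverse.mpr (hqv.sublist (List.tail_sublist _)), ?_⟩
    intro c hc d hc2 hcd
    subst hcd
    rw [List.mem_reverse] at hc2
    have hcp : c ∈ p.vertList := (List.dropLast_sublist _).mem hc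
    have hcq : c ∈ q.vertList := (List.tail_sublist _).mem hc2
    rcases hcross c hcp hcq with rfl | rfl
    · exact start_not_mem_tail q hqv hc2
    · exact end_not_mem_dropLast p hpv hc
  · rw [edgeSet_append, edgeSet_reverse]

end Walk
end Multigraph

/-- `ncard` of a set given by a nodup list, intersected with a set. -/
lemma ncard_setOf_mem_inter {α : Type*} [DecidableEq α] (l : List α) (hl : l.Nodup) (S : Set α)
    [DecidablePred (· ∈ S)] :
    ({a | a ∈ l} ∩ S).ncard = l.countP (fun a => decide (a ∈ S)) := by
  have h1 : {a | a ∈ l} ∩ S = ↑(l.filter (fun a => decide (a ∈ S))).toFinset := by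
    ext a
    simp [List.mem_filter, Set.mem_inter_iff]
  rw [h1, Set.ncard_coe_finset, List.toFinset_card_of_nodup (hl.filter _),
    List.countP_eq_length_filter]

namespace Multigraph
namespace Walk

/-- Pushing a walk forward along a vertex map compatible with the incidences. -/
def mapGraph {V W E : Type*} {G : Multigraph V E}
    {G' : Multigraph W E} (f : V → W) (hf : ∀ e, G'.inc e = Sym2.map f (G.inc e)) :
    {x y : V} → G.Walk x y → G'.Walk (f x) (f y)
  | _, _, .nil x => .nil (f x)
  | _, _, .cons e h t => .cons e (by rw [hf e, h, Sym2.map_pair_eq]) (mapGraph f hf t)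

@[simp] lemma edgeList_mapGraph {V W E : Type*} {G : Multigraph V E}
    {G' : Multigraph W E} (f : V → W) (hf : ∀ e, G'.inc e = Sym2.map f (G.inc e)) :
    ∀ {x y : V} (w : G.Walk x y), (w.mapGraph f hf).edgeList = w.edgeList
  | _, _, .nil _ => rfl
  | _, _, .cons e h t => by
      simp [mapGraph, edgeList_mapGraph f hf t]

@[simp] lemma vertList_mapGraph {V W E : Type*} {G : Multigraph V E}
    {G' : Multigraph W E} (f : V → W) (hf : ∀ e, G'.inc e = Sym2.map f (G.inc e)) :
    ∀ {x y : V} (w : G.Walk x y), (w.mapGraph f hf).vertList = w.vertList.map f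
  | _, _, .nil _ => rfl
  | _, _, .cons e h t => by
      simp [mapGraph, vertList_mapGraph f hf t]

end Walk
end Multigraph

section Split

variable {V : Type u} {E : Type v}

/-- The natural projection from the split graph's vertices. -/
def phiMap (u : V) : V ⊕ Unit → V := Sum.elim id fun _ => u

@[simp] lemma phiMap_inl (u x : V) : phiMap u (Sum.inl x) = x := rfl

@[simp] lemma phiMap_inr (u : V) (t : Unit) : phiMap u (Sum.inr t) = u := rfl

lemma phiMap_eq_u {u : V} {c : V ⊕ Unit} (h : phiMap u c = u) :
    c = Sum.inl u ∨ c = Sum.inr () := by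
  cases c with
  | inl v => exact Or.inl (by rw [← h]; rfl)
  | inr t => exact Or.inr (by cases t; rfl)

lemma phiMap_ne_u {u : V} {c : V ⊕ Unit} (h : phiMap u c ≠ u) :
    c = Sum.inl (phiMap u c) := by
  cases c with
  | inl v => rfl
  | inr t => exact absurd rfl h

variable {Ω : BiasedGraph V E} {u : V} {Sg : Set E} {H : Multigraph (V ⊕ Unit) E}

/-- The walk `w` of `Ω` can be lifted to `H` starting from vertex `a`. -/
def Okay (H : Multigraph (V ⊕ Unit) E) :
    {x y : V} → Ω.toMultigraph.Walk x y → (V ⊕ Unit) → Prop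
  | _, _, .nil _, _ => True
  | _, _, .cons e _ t, a => ∃ b, H.inc e = s(a, b) ∧ Okay H t b

lemma phi_other {x m : V} {a b : V ⊕ Unit} {e : E}
    (hinc : ∀ e, Ω.inc e = Sym2.map (phiMap u) (H.inc e))
    (hab : H.inc e = s(a, b)) (ha : phiMap u a = x) (he : Ω.inc e = s(x, m)) :
    phiMap u b = m := by
  have hs : s(phiMap u a, phiMap u b) = s(x, m) := by
    rw [← Sym2.map_pair_eq, ← hab, ← hinc, he]
  rw [Sym2.eq_iff] at hs
  rcases hs with ⟨_, h2⟩ | ⟨h1, h2⟩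
  · exact h2
  · rw [h2, ← h1]
    exact ha.symm

lemma lift_exists
    (hinc : ∀ e, Ω.inc e = Sym2.map (phiMap u) (H.inc e))
    (hshape : ∀ e ∈ Sg, ∃ c : V, H.inc e = s(Sum.inl c, Sum.inr ()))
    (hinrIff : ∀ e, (Sum.inr () : V ⊕ Unit) ∈ H.inc e ↔ e ∈ Sg)
    [DecidablePred (· ∈ Sg)] :
    ∀ {x y : V} (w : Ω.toMultigraph.Walk x y) (a : V ⊕ Unit), phiMap u a = x →
      Okay H w a →
      ∃ (b : V ⊕ Unit) (W : H.Walk a b), phiMap u b = y ∧ W.edgeList = w.edgeList ∧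
        W.vertList.map (phiMap u) = w.vertList ∧
        ((a = Sum.inr () ↔ b = Sum.inr ()) ↔
          Even (w.edgeList.countP (fun e => decide (e ∈ Sg))))
  | x, _, .nil _, a, ha, _ => by
      refine ⟨a, .nil a, ha, rfl, by simp [ha], by simp⟩
  | x, _, .cons e he t, a, ha, hok => by
      obtain ⟨b, hab, hokt⟩ := hok
      have hb : phiMap u b = _ := phi_other hinc hab ha he
      obtain ⟨c, W, hc, hel, hvl, hpar⟩ := lift_exists hinc hshape hinrIff t b hb hokt
      refine ⟨c, .cons e hab W, hc, by simp [hel], by simp [hvl, ha], ?_⟩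
      by_cases hSg : e ∈ Sg
      · obtain ⟨d, hd⟩ := hshape e hSg
        rw [hd, Sym2.eq_iff] at hab
        have hone : (a = Sum.inr () ↔ ¬ (b = Sum.inr ())) := by
          rcases hab with ⟨h1, h2⟩ | ⟨h1, h2⟩ <;> simp [← h1, ← h2]
        have hcount : (Multigraph.Walk.cons e he t).edgeList.countP (fun e => decide (e ∈ Sg))
            = t.edgeList.countP (fun e => decide (e ∈ Sg)) + 1 := by
          simp [List.countP_cons, hSg]
        rw [hcount, Nat.even_add_one, ← hpar]
        tauto
      · have hanr : a ≠ Sum.inr () := by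
          rintro rfl
          exact hSg ((hinrIff e).mp (by rw [hab]; exact Sym2.mem_mk_left _ _))
        have hbnr : b ≠ Sum.inr () := by
          rintro rfl
          exact hSg ((hinrIff e).mp (by rw [hab]; exact Sym2.mem_mk_right _ _))
        have hcount : (Multigraph.Walk.cons e he t).edgeList.countP (fun e => decide (e ∈ Sg))
            = t.edgeList.countP (fun e => decide (e ∈ Sg)) := by
          simp [List.countP_cons, hSg]
        rw [hcount, ← hpar]
        simp [hanr, hbnr]

open Classical in
/-- The canonical starting vertex for lifting a walk. -/
noncomputable def startLift (u : V) (Sg : Set E) :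
    {x y : V} → Ω.toMultigraph.Walk x y → V ⊕ Unit
  | x, _, .nil _ => Sum.inl x
  | x, _, .cons e _ _ => if x = u ∧ e ∈ Sg then Sum.inr () else Sum.inl x

lemma phiMap_startLift : ∀ {x y : V} (w : Ω.toMultigraph.Walk x y),
    phiMap u (startLift u Sg w) = x
  | _, _, .nil _ => rfl
  | x, _, .cons e he t => by
      rw [startLift]
      split
      · next h => rw [phiMap_inr, h.1]
      · rfl

lemma okay_of
    (hinc : ∀ e, Ω.inc e = Sym2.map (phiMap u) (H.inc e))
    (hshape : ∀ e ∈ Sg, ∃ c : V, H.inc e = s(Sum.inl c, Sum.inr ()))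
    (hinrIff : ∀ e, (Sum.inr () : V ⊕ Unit) ∈ H.inc e ↔ e ∈ Sg) :
    ∀ {x y : V} (w : Ω.toMultigraph.Walk x y),
      u ∉ w.vertList.tail.dropLast → Okay H w (startLift u Sg w)
  | _, _, .nil _, _ => trivial
  | x, z, @Multigraph.Walk.cons _ _ _ _ m _ e he t, hInt => by
      have hx : x ∈ Ω.inc e := by rw [he]; exact Sym2.mem_mk_left _ _
      have hmem : startLift u Sg (Multigraph.Walk.cons e he t) ∈ H.inc e := by
        rw [startLift]
        split
        · next h =>
            obtain ⟨c, hc⟩ := hshape e h.2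
            rw [hc]
            exact Sym2.mem_mk_right _ _
        · next h =>
            rw [hinc] at hx
            obtain ⟨p, hp, hpx⟩ := Sym2.mem_map.mp hx
            cases p with
            | inl v =>
                rw [phiMap_inl] at hpx
                subst hpx
                exact hp
            | inr tt =>
                exfalso
                cases tt
                rw [phiMap_inr] at hpx
                exact h ⟨hpx.symm, (hinrIff e).mp hp⟩
      obtain ⟨b, hab⟩ := Sym2.mem_iff_exists.mp hmem
      refine ⟨b, hab, ?_⟩
      have hm : phiMap u b = m :=
        phi_other hinc hab (phiMap_startLift (Multigraph.Walk.cons e he t)) he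
      cases t with
      | nil => trivial
      | cons f hf t' =>
          have hmm : m ∈ (Multigraph.Walk.cons e he (Multigraph.Walk.cons f hf t')).vertList.tail.dropLast := by
            show m ∈ ((Multigraph.Walk.cons f hf t').vertList).dropLast
            rw [Multigraph.Walk.vertList_cons,
              List.dropLast_cons_of_ne_nil (Multigraph.Walk.vertList_ne_nil t')]
            exact List.mem_cons_self
          have hmu : m ≠ u := fun h => hInt (h ▸ hmm)
          have hb : b = Sum.inl m := by
            have h2 := phiMap_ne_u (c := b) (by rw [hm]; exact hmu)
            rw [hm] at h2
            exact h2
          have hInt' : u ∉ (Multigraph.Walk.cons f hf t').vertList.tail.dropLast := by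
            intro hu
            apply hInt
            show u ∈ ((Multigraph.Walk.cons f hf t').vertList).dropLast
            rw [Multigraph.Walk.vertList_cons,
              List.dropLast_cons_of_ne_nil (Multigraph.Walk.vertList_ne_nil t')]
            rw [Multigraph.Walk.vertList_cons, List.tail_cons] at hu
            exact List.mem_cons_of_mem _ hu
          have IH := okay_of hinc hshape hinrIff (Multigraph.Walk.cons f hf t') hInt'
          have hstart : startLift u Sg (Multigraph.Walk.cons f hf t') = Sum.inl m := by
            rw [startLift]
            split
            · next h => exact absurd h.1 hmu
            · rfl
          rw [hstart] at IH
          rw [hb]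
          exact IH

end Split

namespace Multigraph
namespace Walk

variable {V : Type u} {E : Type v} {G : Multigraph V E}

lemma IsCycle.not_internal {x : V} {w : G.Walk x x} (hc : w.IsCycle) :
    x ∉ w.vertList.tail.dropLast := by
  obtain ⟨m, e, he, t, rfl⟩ := hc.exists_cons
  have hvd := hc.2.2
  rw [vertList_cons, List.dropLast_cons_of_ne_nil (vertList_ne_nil t), List.nodup_cons] at hvd
  rw [vertList_cons, List.tail_cons]
  exact hvd.1

end Walk
end Multigraph

lemma list_map_dropLast {α β : Type*} (f : α → β) :
    ∀ (l : List α), l.dropLast.map f = (l.map f).dropLast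
  | [] => rfl
  | [a] => rfl
  | a :: b :: l => by
      rw [List.dropLast_cons₂, List.map_cons, List.map_cons, List.map_cons,
        List.dropLast_cons₂, ← List.map_cons]
      exact congrArg (f a :: ·) (list_map_dropLast f (b :: l))

section Split2

variable {V : Type u} {E : Type v}
variable {Ω : BiasedGraph V E} {u : V} {Sg : Set E} {H : Multigraph (V ⊕ Unit) E}

open Multigraph

/-- Nodup criterion for a lifted `inl u`–`inr ()` path. -/
lemma nodup_lift (L : List (V ⊕ Unit))
    (hnd : (L.map (phiMap u)).dropLast.Nodup)
    (hhead : ∃ M, L = Sum.inl u :: M)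
    (hlast : L.getLast? = some (Sum.inr ())) : L.Nodup := by
  obtain ⟨M, rfl⟩ := hhead
  rcases M with _ | ⟨m, M'⟩
  · simp at hlast
  · set L := Sum.inl u :: m :: M' with hL
    have hLne : L ≠ [] := by simp [hL]
    have hDmap : (L.dropLast).map (phiMap u) = (L.map (phiMap u)).dropLast :=
      list_map_dropLast _ _
    have hDnd : L.dropLast.Nodup := List.Nodup.of_map _ (hDmap ▸ hnd)
    have hsplit : L.dropLast ++ [Sum.inr ()] = L := by
      have := List.dropLast_append_getLast hLne
      rwa [List.getLast_eq_iff_getLast?_eq_some hLne |>.mpr hlast] at this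
    rw [← hsplit, List.nodup_append]
    refine ⟨hDnd, List.nodup_singleton _, ?_⟩
    intro c hc d hc2 hcd
    rw [List.mem_singleton] at hc2
    subst hc2
    subst hcd
    have hD : L.dropLast = Sum.inl u :: (m :: M').dropLast := by
      rw [hL, List.dropLast_cons_of_ne_nil (by simp)]
    rw [hD, List.mem_cons] at hc
    rcases hc with hc | hc
    · exact absurd hc (by simp)
    · have : phiMap u (Sum.inr ()) ∈ ((m :: M').dropLast).map (phiMap u) :=
        List.mem_map_of_mem hc
      have hmap2 : (L.dropLast).map (phiMap u)
          = u :: ((m :: M').dropLast).map (phiMap u) := by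
        rw [hD]; rfl
      have hnd2 : ((L.dropLast).map (phiMap u)).Nodup := hDmap ▸ hnd
      rw [hmap2, List.nodup_cons] at hnd2
      exact hnd2.1 (by simpa using this)

lemma key_endpoints {x : V} (a b : V ⊕ Unit) (ha : phiMap u a = x) (hb : phiMap u b = x)
    (hiff : a = Sum.inr () ↔ b = Sum.inr ()) : a = b := by
  rcases a with v | t <;> rcases b with v' | t'
  · rw [phiMap_inl] at ha hb
    rw [ha, hb]
  · simp at hiff
  · simp at hiff
  · cases t; cases t'; rfl

/-- Lifting a balanced (even) closed walk to a closed walk in `H`. -/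
lemma liftClosed
    (hinc : ∀ e, Ω.inc e = Sym2.map (phiMap u) (H.inc e))
    (hshape : ∀ e ∈ Sg, ∃ c : V, H.inc e = s(Sum.inl c, Sum.inr ()))
    (hinrIff : ∀ e, (Sum.inr () : V ⊕ Unit) ∈ H.inc e ↔ e ∈ Sg)
    [DecidablePred (· ∈ Sg)] {x : V} (w : Ω.toMultigraph.Walk x x)
    (hc : w.IsCycle)
    (heven : Even (w.edgeList.countP (fun e => decide (e ∈ Sg))))
    (hInt : u ∉ w.vertList.tail.dropLast) :
    H.IsCycleSet w.edgeSet := by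
  obtain ⟨a, hOk, hphia⟩ : ∃ a, Okay H w a ∧ phiMap u a = x :=
    ⟨_, okay_of hinc hshape hinrIff w hInt, phiMap_startLift w⟩
  obtain ⟨b, W, hb, hel, hvl, hpar⟩ := lift_exists hinc hshape hinrIff w a hphia hOk
  obtain rfl : b = a := (key_endpoints a b hphia hb (hpar.mpr heven)).symm
  refine ⟨_, W, ⟨by rw [hel]; exact hc.1, by rw [hel]; exact hc.2.1, ?_⟩, ?_⟩
  · apply List.Nodup.of_map (phiMap u)
    rw [list_map_dropLast, hvl]
    exact hc.2.2
  · ext e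
    simp [Multigraph.Walk.edgeSet, hel]

/-- Lifting an unbalanced (odd) cycle based at `u` to an `inl u`–`inr ()` path in `H`. -/
lemma liftOpen
    (hinc : ∀ e, Ω.inc e = Sym2.map (phiMap u) (H.inc e))
    (hshape : ∀ e ∈ Sg, ∃ c : V, H.inc e = s(Sum.inl c, Sum.inr ()))
    (hinrIff : ∀ e, (Sum.inr () : V ⊕ Unit) ∈ H.inc e ↔ e ∈ Sg)
    [DecidablePred (· ∈ Sg)] (w : Ω.toMultigraph.Walk u u)
    (hc : w.IsCycle)
    (hodd : ¬ Even (w.edgeList.countP (fun e => decide (e ∈ Sg)))) :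
    ∃ W : H.Walk (Sum.inl u) (Sum.inr ()), W.vertList.Nodup ∧ W.edgeList.Nodup ∧
      W.edgeSet = w.edgeSet := by
  obtain ⟨a, hOk, hphia⟩ : ∃ a, Okay H w a ∧ phiMap u a = u :=
    ⟨_, okay_of hinc hshape hinrIff w hc.not_internal, phiMap_startLift w⟩
  obtain ⟨b, W, hb, hel, hvl, hpar⟩ := lift_exists hinc hshape hinrIff w a hphia hOk
  have hniff : ¬ (a = Sum.inr () ↔ b = Sum.inr ()) := fun h => hodd (hpar.mp h)
  have hcases : (a = Sum.inl u ∧ b = Sum.inr ()) ∨ (a = Sum.inr () ∧ b = Sum.inl u) := by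
    rcases phiMap_eq_u hphia with rfl | rfl <;> rcases phiMap_eq_u hb with rfl | rfl
    · exact absurd (Iff.of_eq rfl) hniff
    · exact Or.inl ⟨rfl, rfl⟩
    · exact Or.inr ⟨rfl, rfl⟩
    · exact absurd (Iff.of_eq rfl) hniff
  rcases hcases with ⟨rfl, rfl⟩ | ⟨rfl, rfl⟩
  · refine ⟨W, ?_, hel ▸ hc.2.1, by ext e; simp [Multigraph.Walk.edgeSet, hel]⟩
    refine nodup_lift (u := u) W.vertList (by rw [hvl]; exact hc.2.2) ?_ ?_
    · obtain ⟨M, hM⟩ := W.vertList_eq_cons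
      exact ⟨M, hM⟩
    · exact Multigraph.Walk.getLast?_vertList W
  · refine ⟨W.reverse, ?_, ?_, ?_⟩
    · refine nodup_lift (u := u) W.reverse.vertList ?_ ?_ ?_
      · rw [Multigraph.Walk.vertList_reverse, List.map_reverse, hvl]
        have : w.vertList.reverse.dropLast = w.vertList.tail.reverse := by
          obtain ⟨l, hl⟩ := w.vertList_eq_cons
          rw [hl]
          simp
        rw [this]
        exact List.nodup_reverse.mpr hc.tail_nodup
      · obtain ⟨M, hM⟩ := W.reverse.vertList_eq_cons
        exact ⟨M, hM⟩
      · exact Multigraph.Walk.getLast?_vertList W.reverse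
    · rw [Multigraph.Walk.edgeList_reverse]
      exact List.nodup_reverse.mpr (hel ▸ hc.2.1)
    · rw [Multigraph.Walk.edgeSet_reverse]
      ext e
      simp [Multigraph.Walk.edgeSet, hel]



/-- Counting `Sg`-edges of a walk in `H` by visits to the split vertex. -/
lemma countSg_eq [DecidablePred (· ∈ Sg)] [DecidableEq V]
    (hshape : ∀ e ∈ Sg, ∃ c : V, H.inc e = s(Sum.inl c, Sum.inr ()))
    (hinrIff : ∀ e, (Sum.inr () : V ⊕ Unit) ∈ H.inc e ↔ e ∈ Sg) :
    ∀ {a b : V ⊕ Unit} (W : H.Walk a b),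
      W.edgeList.countP (fun e => decide (e ∈ Sg))
          + (if a = Sum.inr () then 1 else 0) + (if b = Sum.inr () then 1 else 0)
        = 2 * W.vertList.countP (fun c => decide (c = Sum.inr ()))
  | a, _, .nil _ => by
      show 0 + _ + _ = 2 * ([a].countP (fun c => decide (c = Sum.inr ())))
      by_cases ha : a = Sum.inr () <;> simp [ha, List.countP_cons]
  | a, bb, @Multigraph.Walk.cons _ _ _ _ m _ e he t => by
      have IH := countSg_eq hshape hinrIff t
      have hkey : (if e ∈ Sg then 1 else 0)
          = (if a = Sum.inr () then 1 else 0) + (if m = Sum.inr () then 1 else 0) := by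
        by_cases hSg : e ∈ Sg
        · obtain ⟨c, hcs⟩ := hshape e hSg
          rw [hcs, Sym2.eq_iff] at he
          rcases he with ⟨ha, hm⟩ | ⟨ha, hm⟩ <;> simp [← ha, ← hm, hSg]
        · have hanr : a ≠ Sum.inr () := by
            rintro rfl
            exact hSg ((hinrIff e).mp (by rw [he]; exact Sym2.mem_mk_left _ _))
          have hmnr : m ≠ Sum.inr () := by
            rintro rfl
            exact hSg ((hinrIff e).mp (by rw [he]; exact Sym2.mem_mk_right _ _))
          simp [hSg, hanr, hmnr]
      rw [Multigraph.Walk.edgeList_cons, List.countP_cons, Multigraph.Walk.vertList_cons,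
        List.countP_cons]
      have hdec : (if (decide (e ∈ Sg)) = true then 1 else 0)
          = (if e ∈ Sg then 1 else 0) := by simp
      have hdec2 : (if (decide (a = Sum.inr ())) = true then 1 else 0)
          = (if a = Sum.inr () then 1 else 0) := by simp
      omega

/-- Transfer of incident-vertex sets under the projection. -/
lemma VSet_phi (hinc : ∀ e, Ω.inc e = Sym2.map (phiMap u) (H.inc e)) (X : Set E) :
    Ω.toMultigraph.VSet X = phiMap u '' (H.VSet X) := by
  ext v
  constructor
  · rintro ⟨e, he, hv⟩
    rw [hinc] at hv
    obtain ⟨c, hc, rfl⟩ := Sym2.mem_map.mp hv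
    exact ⟨c, ⟨e, he, hc⟩, rfl⟩
  · rintro ⟨c, ⟨e, he, hc⟩, rfl⟩
    exact ⟨e, he, by rw [hinc]; exact Sym2.mem_map.mpr ⟨c, hc, rfl⟩⟩

end Split2
/-- Splitting a balancing vertex of a signed graph yields a graph whose
cycle matroid is the frame matroid: the frame circuits are exactly the cycles of `H`. -/
theorem stmt5 {V E : Type*} (Ω : BiasedGraph V E) (u : V)
    (hu : Ω.BalancingVertex u) (Sg : Set E)
    (hSg : Sg ⊆ Ω.toMultigraph.deltaPlus u)
    (hsign : ∀ C, Ω.toMultigraph.IsCycleSet C → (Ω.Balanced C ↔ Even (C ∩ Sg).ncard))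
    (H : Multigraph (V ⊕ Unit) E)
    (h1 : ∀ e, e ∉ Sg → H.inc e = Sym2.map Sum.inl (Ω.inc e))
    (h2 : ∀ e ∈ Sg, Ω.toMultigraph.IsLoop e → H.inc e = s(Sum.inl u, Sum.inr ()))
    (h3 : ∀ e ∈ Sg, ¬ Ω.toMultigraph.IsLoop e → ∀ w, Ω.inc e = s(u, w) →
      H.inc e = s(Sum.inr (), Sum.inl w)) :
    ∀ C, Ω.FrameCircuit C ↔ H.IsCycleSet C := by
  classical
  have hinc : ∀ e, Ω.inc e = Sym2.map (phiMap u) (H.inc e) := by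
    intro e
    by_cases he : e ∈ Sg
    · by_cases hl : Ω.toMultigraph.IsLoop e
      · have hu : u ∈ Ω.inc e := hSg he
        obtain ⟨w', hw'⟩ := Sym2.mem_iff_exists.mp hu
        have hl' := hl
        rw [Multigraph.IsLoop, hw', Sym2.mk_isDiag_iff] at hl'
        subst hl'
        rw [h2 e he hl, Sym2.map_pair_eq, phiMap_inl, phiMap_inr, hw']
      · have hu : u ∈ Ω.inc e := hSg he
        obtain ⟨w', hw'⟩ := Sym2.mem_iff_exists.mp hu
        rw [h3 e he hl w' hw', Sym2.map_pair_eq, phiMap_inl, phiMap_inr, hw']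
    · rw [h1 e he, Sym2.map_map]
      have hcomp : phiMap u ∘ Sum.inl = id := rfl
      rw [hcomp, Sym2.map_id, id_eq]
  have hshape : ∀ e ∈ Sg, ∃ c : V, H.inc e = s(Sum.inl c, Sum.inr ()) := by
    intro e he
    by_cases hl : Ω.toMultigraph.IsLoop e
    · exact ⟨u, h2 e he hl⟩
    · have hu : u ∈ Ω.inc e := hSg he
      obtain ⟨w', hw'⟩ := Sym2.mem_iff_exists.mp hu
      exact ⟨w', by rw [h3 e he hl w' hw']; exact Sym2.eq_swap⟩
  have hinrIff : ∀ e, (Sum.inr () : V ⊕ Unit) ∈ H.inc e ↔ e ∈ Sg := by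
    intro e
    constructor
    · intro hmem
      by_contra he
      rw [h1 e he] at hmem
      obtain ⟨a, _, ha⟩ := Sym2.mem_map.mp hmem
      simp at ha
    · intro he
      obtain ⟨c, hc⟩ := hshape e he
      rw [hc]
      exact Sym2.mem_mk_right _ _
  -- notation for counting Sg-edges
  have hcount_eq : ∀ (l : List E), l.Nodup → ({a | a ∈ l} ∩ Sg).ncard
      = l.countP (fun e => decide (e ∈ Sg)) := fun l hl => ncard_setOf_mem_inter l hl Sg
  intro C
  constructor
  · -- frame circuit → cycle of H
    intro hFC
    rcases hFC with ⟨hcyc, hbal⟩ | hTH | hLH | hCT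
    · -- balanced cycle
      obtain ⟨x, w, hw, hwC⟩ := hcyc
      have heven : Even ((C ∩ Sg).ncard) := (hsign C ⟨x, w, hw, hwC⟩).mp hbal
      by_cases hu : u ∈ w.vertList
      · set w' := w.rotate hu with hw'def
        have hc' := Multigraph.Walk.isCycle_rotate hw hu
        have hes' : w'.edgeSet = C := by rw [hw'def, Multigraph.Walk.edgeSet_rotate, hwC]
        have hevenCnt : Even (w'.edgeList.countP (fun e => decide (e ∈ Sg))) := by
          rwa [← hcount_eq w'.edgeList hc'.2.1, show {a | a ∈ w'.edgeList} = C from hes']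
        have hres := liftClosed hinc hshape hinrIff w' hc' hevenCnt hc'.not_internal
        rwa [hes'] at hres
      · have hInt : u ∉ w.vertList.tail.dropLast := fun h =>
          hu ((List.tail_sublist _).mem ((List.dropLast_sublist _).mem h))
        have hevenCnt : Even (w.edgeList.countP (fun e => decide (e ∈ Sg))) := by
          rwa [← hcount_eq w.edgeList hw.2.1, show {a | a ∈ w.edgeList} = C from hwC]
        have hres := liftClosed hinc hshape hinrIff w hw hevenCnt hInt
        rwa [hwC] at hres
    · -- tight handcuffs
      obtain ⟨C₁, C₂, ⟨hcyc₁, hnb₁⟩, ⟨hcyc₂, hnb₂⟩, hdisj, ⟨x₀, hVV⟩, rfl⟩ := hTH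
      have hodd₁ : ¬ Even ((C₁ ∩ Sg).ncard) := fun h => hnb₁ ((hsign C₁ hcyc₁).mpr h)
      have hodd₂ : ¬ Even ((C₂ ∩ Sg).ncard) := fun h => hnb₂ ((hsign C₂ hcyc₂).mpr h)
      have huV : ∀ (D : Set E), ¬ Even ((D ∩ Sg).ncard) → u ∈ Ω.toMultigraph.VSet D := by
        intro D hodd
        have hne : (D ∩ Sg).Nonempty := by
          by_contra hcon
          rw [Set.not_nonempty_iff_eq_empty] at hcon
          rw [hcon] at hodd
          simp at hodd
        obtain ⟨e, heD, heS⟩ := hne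
        exact ⟨e, heD, hSg heS⟩
      have hu1 : u ∈ Ω.toMultigraph.VSet C₁ := huV C₁ hodd₁
      have hu2 : u ∈ Ω.toMultigraph.VSet C₂ := huV C₂ hodd₂
      have hx₀ : x₀ = u := by
        have : u ∈ ({x₀} : Set V) := hVV ▸ ⟨hu1, hu2⟩
        rw [Set.mem_singleton_iff] at this
        exact this.symm
      rw [hx₀] at hVV
      obtain ⟨x₁, w₁, hw₁, hwC₁⟩ := hcyc₁
      obtain ⟨x₂, w₂, hw₂, hwC₂⟩ := hcyc₂
      have huv₁ : u ∈ w₁.vertList :=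
        Multigraph.Walk.VSet_subset_vertList w₁ u (hwC₁ ▸ hu1)
      have huv₂ : u ∈ w₂.vertList :=
        Multigraph.Walk.VSet_subset_vertList w₂ u (hwC₂ ▸ hu2)
      set w₁' := w₁.rotate huv₁ with hw₁def
      set w₂' := w₂.rotate huv₂ with hw₂def
      have hc₁ := Multigraph.Walk.isCycle_rotate hw₁ huv₁
      have hc₂ := Multigraph.Walk.isCycle_rotate hw₂ huv₂
      have hes₁ : w₁'.edgeSet = C₁ := by rw [hw₁def, Multigraph.Walk.edgeSet_rotate, hwC₁]
      have hes₂ : w₂'.edgeSet = C₂ := by rw [hw₂def, Multigraph.Walk.edgeSet_rotate, hwC₂]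
      have hoddCnt₁ : ¬ Even (w₁'.edgeList.countP (fun e => decide (e ∈ Sg))) := by
        rwa [← hcount_eq w₁'.edgeList hc₁.2.1, show {a | a ∈ w₁'.edgeList} = C₁ from hes₁]
      have hoddCnt₂ : ¬ Even (w₂'.edgeList.countP (fun e => decide (e ∈ Sg))) := by
        rwa [← hcount_eq w₂'.edgeList hc₂.2.1, show {a | a ∈ w₂'.edgeList} = C₂ from hes₂]
      obtain ⟨W₁, hv₁, he₁, hE₁⟩ := liftOpen hinc hshape hinrIff w₁' hc₁ hoddCnt₁
      obtain ⟨W₂, hv₂, he₂, hE₂⟩ := liftOpen hinc hshape hinrIff w₂' hc₂ hoddCnt₂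
      rw [hes₁] at hE₁
      rw [hes₂] at hE₂
      have hne : (Sum.inl u : V ⊕ Unit) ≠ Sum.inr () := by simp
      have hWne₁ : W₁.edgeList ≠ [] := Multigraph.Walk.edgeList_ne_nil_of_ne hne W₁
      have hWne₂ : W₂.edgeList ≠ [] := Multigraph.Walk.edgeList_ne_nil_of_ne hne W₂
      have hcross : ∀ c ∈ W₁.vertList, c ∈ W₂.vertList →
          c = Sum.inl u ∨ c = Sum.inr () := by
        intro c hc1 hc2
        have hφ1 : phiMap u c ∈ Ω.toMultigraph.VSet C₁ := by
          rw [VSet_phi hinc]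
          exact ⟨c, hE₁ ▸ Multigraph.Walk.vertList_subset_VSet W₁ hWne₁ c hc1, rfl⟩
        have hφ2 : phiMap u c ∈ Ω.toMultigraph.VSet C₂ := by
          rw [VSet_phi hinc]
          exact ⟨c, hE₂ ▸ Multigraph.Walk.vertList_subset_VSet W₂ hWne₂ c hc2, rfl⟩
        have : phiMap u c ∈ ({u} : Set V) := hVV ▸ ⟨hφ1, hφ2⟩
        rw [Set.mem_singleton_iff] at this
        exact phiMap_eq_u this
      have hdisjE : ∀ e ∈ W₁.edgeList, e ∉ W₂.edgeList := by
        intro e hw1 hw2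
        exact Set.disjoint_left.mp hdisj (by rw [← hE₁]; exact hw1) (by rw [← hE₂]; exact hw2)
      obtain ⟨Z, hZc, hZes⟩ := Multigraph.Walk.combine W₁ W₂ hne hv₁ hv₂ he₁ he₂ hdisjE hcross
      exact ⟨_, Z, hZc, by rw [hZes, hE₁, hE₂]⟩
    · -- loose handcuffs: impossible
      obtain ⟨C₁, C₂, P, x, y, ⟨hcyc₁, hnb₁⟩, ⟨hcyc₂, hnb₂⟩, hVdisj, _, _, _, _, rfl⟩ := hLH
      exfalso
      have hodd₁ : ¬ Even ((C₁ ∩ Sg).ncard) := fun h => hnb₁ ((hsign C₁ hcyc₁).mpr h)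
      have hodd₂ : ¬ Even ((C₂ ∩ Sg).ncard) := fun h => hnb₂ ((hsign C₂ hcyc₂).mpr h)
      have huV : ∀ (D : Set E), ¬ Even ((D ∩ Sg).ncard) → u ∈ Ω.toMultigraph.VSet D := by
        intro D hodd
        have hne : (D ∩ Sg).Nonempty := by
          by_contra hcon
          rw [Set.not_nonempty_iff_eq_empty] at hcon
          rw [hcon] at hodd
          simp at hodd
        obtain ⟨e, heD, heS⟩ := hne
        exact ⟨e, heD, hSg heS⟩
      exact Set.disjoint_left.mp hVdisj (huV C₁ hodd₁) (huV C₂ hodd₂)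
    · -- contrabalanced theta: impossible
      obtain ⟨x, y, P₁, P₂, P₃, hTheta, hnb12, hnb23, hnb13, rfl⟩ := hCT
      exfalso
      obtain ⟨hxy, hP1, hP2, hP3, hD12, hD23, hD13, hV12, hV23, hV13⟩ := hTheta
      obtain ⟨q₁, hq₁, hqs₁⟩ := hP1
      obtain ⟨q₂, hq₂, hqs₂⟩ := hP2
      obtain ⟨q₃, hq₃, hqs₃⟩ := hP3
      have hfin : ∀ (w : Ω.toMultigraph.Walk x y) (P : Set E), w.edgeSet = P → P.Finite := by
        intro w P hP
        rw [← hP]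
        exact w.edgeList.finite_toSet
      have hpaircyc : ∀ (wa wb : Ω.toMultigraph.Walk x y) (Pa Pb : Set E),
          wa.IsPath → wb.IsPath → wa.edgeSet = Pa → wb.edgeSet = Pb → Disjoint Pa Pb →
          Ω.toMultigraph.VSet Pa ∩ Ω.toMultigraph.VSet Pb ⊆ {x, y} →
          Ω.toMultigraph.IsCycleSet (Pa ∪ Pb) := by
        intro wa wb Pa Pb hpa hpb hesa hesb hdab hvab
        have hnea : wa.edgeList ≠ [] := Multigraph.Walk.edgeList_ne_nil_of_ne hxy wa
        have hneb : wb.edgeList ≠ [] := Multigraph.Walk.edgeList_ne_nil_of_ne hxy wb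
        have hcross : ∀ c ∈ wa.vertList, c ∈ wb.vertList → c = x ∨ c = y := by
          intro c hca hcb
          have h1 : c ∈ Ω.toMultigraph.VSet Pa :=
            hesa ▸ Multigraph.Walk.vertList_subset_VSet wa hnea c hca
          have h2 : c ∈ Ω.toMultigraph.VSet Pb :=
            hesb ▸ Multigraph.Walk.vertList_subset_VSet wb hneb c hcb
          have := hvab ⟨h1, h2⟩
          rcases this with h | h
          · exact Or.inl h
          · exact Or.inr h
        have hdisjE : ∀ e ∈ wa.edgeList, e ∉ wb.edgeList := by
          intro e h1 h2
          exact Set.disjoint_left.mp hdab (by rw [← hesa]; exact h1) (by rw [← hesb]; exact h2)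
        obtain ⟨Z, hZc, hZes⟩ := Multigraph.Walk.combine wa wb hxy hpa hpb
          (Multigraph.Walk.edgeList_nodup_of_vertList_nodup wa hpa)
          (Multigraph.Walk.edgeList_nodup_of_vertList_nodup wb hpb) hdisjE hcross
        exact ⟨x, Z, hZc, by rw [hZes, hesa, hesb]⟩
      have hsum : ∀ (Pa Pb : Set E), Pa.Finite → Pb.Finite → Disjoint Pa Pb →
          ((Pa ∪ Pb) ∩ Sg).ncard = (Pa ∩ Sg).ncard + (Pb ∩ Sg).ncard := by
        intro Pa Pb hfa hfb hd
        rw [Set.union_inter_distrib_right]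
        exact Set.ncard_union_eq (hd.mono Set.inter_subset_left Set.inter_subset_left)
          (hfa.inter_of_left _) (hfb.inter_of_left _)
      have h12 : ¬ Even ((P₁ ∩ Sg).ncard + (P₂ ∩ Sg).ncard) := by
        rw [← hsum P₁ P₂ (hfin q₁ P₁ hqs₁) (hfin q₂ P₂ hqs₂) hD12]
        exact fun h => hnb12 ((hsign _ (hpaircyc q₁ q₂ P₁ P₂ hq₁ hq₂ hqs₁ hqs₂ hD12 hV12)).mpr h)
      have h23 : ¬ Even ((P₂ ∩ Sg).ncard + (P₃ ∩ Sg).ncard) := by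
        rw [← hsum P₂ P₃ (hfin q₂ P₂ hqs₂) (hfin q₃ P₃ hqs₃) hD23]
        exact fun h => hnb23 ((hsign _ (hpaircyc q₂ q₃ P₂ P₃ hq₂ hq₃ hqs₂ hqs₃ hD23 hV23)).mpr h)
      have h13 : ¬ Even ((P₁ ∩ Sg).ncard + (P₃ ∩ Sg).ncard) := by
        rw [← hsum P₁ P₃ (hfin q₁ P₁ hqs₁) (hfin q₃ P₃ hqs₃) hD13]
        exact fun h => hnb13 ((hsign _ (hpaircyc q₁ q₃ P₁ P₃ hq₁ hq₃ hqs₁ hqs₃ hD13 hV13)).mpr h)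
      rw [Nat.even_add] at h12 h23 h13
      tauto
  · -- cycle of H → frame circuit
    intro hcycH
    obtain ⟨c0, W, hWc, hWes⟩ := hcycH
    rcases Classical.em ((Sum.inl u : V ⊕ Unit) ∈ W.vertList ∧ (Sum.inr () : V ⊕ Unit) ∈ W.vertList) with hboth | hboth
    · -- visits both: tight handcuffs
      obtain ⟨hinlW, hinrW⟩ := hboth
      set W' := W.rotate hinlW with hW'def
      have hWc' := Multigraph.Walk.isCycle_rotate hWc hinlW
      have hes' : W'.edgeSet = C := by rw [hW'def, Multigraph.Walk.edgeSet_rotate, hWes]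
      have hinr' : Sum.inr () ∈ W'.vertList := by
        rw [hW'def, Multigraph.Walk.mem_vertList_rotate]
        exact hinrW
      set p := W'.takeUntil (Sum.inr ()) hinr' with hpdef
      set q := W'.dropUntil (Sum.inr ()) hinr' with hqdef
      have hspec : p.append q = W' := Multigraph.Walk.take_append_drop W' _ hinr'
      have helsplit : W'.edgeList = p.edgeList ++ q.edgeList := by
        rw [← hspec, Multigraph.Walk.edgeList_append]
      have hvsplit : W'.vertList.dropLast = p.vertList.dropLast ++ q.vertList.dropLast := by
        rw [← hspec, Multigraph.Walk.dropLast_vertList_append]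
      have hnodupE := hWc'.2.1
      rw [helsplit, List.nodup_append] at hnodupE
      have hnodupV := hWc'.2.2
      rw [hvsplit, List.nodup_append] at hnodupV
      have hir : (Sum.inl u : V ⊕ Unit) ≠ Sum.inr () := by simp
      have hpne : p.edgeList ≠ [] := Multigraph.Walk.edgeList_ne_nil_of_ne hir p
      have hqne : q.edgeList ≠ [] := Multigraph.Walk.edgeList_ne_nil_of_ne (Ne.symm hir) q
      have hinrdp : Sum.inr () ∉ p.vertList.dropLast :=
        Multigraph.Walk.not_mem_dropLast_takeUntil W' _ hinr'
      have hpstruct : p.vertList = p.vertList.dropLast ++ [Sum.inr ()] :=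
        Multigraph.Walk.vertList_eq_dropLast_append p
      have hqstruct : q.vertList = q.vertList.dropLast ++ [Sum.inl u] :=
        Multigraph.Walk.vertList_eq_dropLast_append q
      have hpD : ∃ l, p.vertList.dropLast = Sum.inl u :: l := by
        obtain ⟨l, hl⟩ := p.vertList_eq_cons
        rcases l with _ | ⟨c, l'⟩
        · exfalso
          have := Multigraph.Walk.getLast?_vertList p
          rw [hl] at this
          simp at this
        · refine ⟨(c :: l').dropLast, ?_⟩
          rw [hl, List.dropLast_cons_of_ne_nil (by simp)]
      have hqD : ∃ l, q.vertList.dropLast = Sum.inr () :: l := by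
        obtain ⟨l, hl⟩ := q.vertList_eq_cons
        rcases l with _ | ⟨c, l'⟩
        · exfalso
          have := Multigraph.Walk.getLast?_vertList q
          rw [hl] at this
          simp at this
        · refine ⟨(c :: l').dropLast, ?_⟩
          rw [hl, List.dropLast_cons_of_ne_nil (by simp)]
      have hinlu_p : Sum.inl u ∈ p.vertList.dropLast := by
        obtain ⟨l, hl⟩ := hpD
        rw [hl]
        exact List.mem_cons_self
      have hinlu_nq : Sum.inl u ∉ q.vertList.dropLast := fun h => hnodupV.2.2 _ hinlu_p _ h rfl
      have hinr_q : Sum.inr () ∈ q.vertList.dropLast := by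
        obtain ⟨l, hl⟩ := hqD
        rw [hl]
        exact List.mem_cons_self
      -- counts of Sg-edges
      have hcntp : p.edgeList.countP (fun e => decide (e ∈ Sg)) = 1 := by
        have hq := countSg_eq hshape hinrIff p
        have h1 : p.vertList.countP (fun c => decide (c = Sum.inr ())) = 1 := by
          conv_lhs => rw [hpstruct]
          rw [List.countP_append]
          have h0 : p.vertList.dropLast.countP (fun c => decide (c = Sum.inr ())) = 0 := by
            rw [List.countP_eq_zero]
            intro c hc
            simp only [decide_eq_true_eq]
            rintro rfl
            exact hinrdp hc
          rw [h0]
          simp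
        rw [h1] at hq
        simp only [hir, if_neg, if_pos, reduceIte] at hq
        omega
      have hcntq : q.edgeList.countP (fun e => decide (e ∈ Sg)) = 1 := by
        have hq := countSg_eq hshape hinrIff q
        have h1 : q.vertList.countP (fun c => decide (c = Sum.inr ())) = 1 := by
          conv_lhs => rw [hqstruct]
          rw [List.countP_append]
          have h0 : q.vertList.dropLast.countP (fun c => decide (c = Sum.inr ())) = 1 :=
            Multigraph.Walk.countP_eq_one_of_nodup_mem hnodupV.2.1 hinr_q
          rw [h0]
          simp [hir]
        rw [h1] at hq
        simp only [hir, if_neg, if_pos, reduceIte] at hq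
        omega
      -- pushed walks are unbalanced cycles
      have hppc0 : (p.mapGraph (phiMap u) hinc).IsCycle := by
        refine ⟨?_, ?_, ?_⟩
        · exact (Multigraph.Walk.edgeList_mapGraph _ hinc p).trans_ne hpne
        · exact (congrArg List.Nodup (Multigraph.Walk.edgeList_mapGraph _ hinc p)).mpr hnodupE.1
        · refine (congrArg (fun l => List.Nodup (List.dropLast l))
            (Multigraph.Walk.vertList_mapGraph _ hinc p)).mpr ?_
          rw [← list_map_dropLast]
          refine List.Nodup.map_on ?_ hnodupV.1
          intro c₁ hc₁ c₂ hc₂ hphi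
          rcases c₁ with v₁ | t₁ <;> rcases c₂ with v₂ | t₂
          · simpa using hphi
          · exact absurd (by cases t₂; exact hc₂) hinrdp
          · exact absurd (by cases t₁; exact hc₁) hinrdp
          · cases t₁; cases t₂; rfl
      have hqqc0 : (q.mapGraph (phiMap u) hinc).IsCycle := by
        refine ⟨?_, ?_, ?_⟩
        · exact (Multigraph.Walk.edgeList_mapGraph _ hinc q).trans_ne hqne
        · exact (congrArg List.Nodup (Multigraph.Walk.edgeList_mapGraph _ hinc q)).mpr hnodupE.2.1
        · refine (congrArg (fun l => List.Nodup (List.dropLast l))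
            (Multigraph.Walk.vertList_mapGraph _ hinc q)).mpr ?_
          rw [← list_map_dropLast]
          refine List.Nodup.map_on ?_ hnodupV.2.1
          intro c₁ hc₁ c₂ hc₂ hphi
          rcases c₁ with v₁ | t₁ <;> rcases c₂ with v₂ | t₂
          · have hv : v₁ = v₂ := by simpa using hphi
            rw [hv]
          · exfalso
            have hv : v₁ = u := by simpa using hphi
            rw [hv] at hc₁
            exact hinlu_nq hc₁
          · exfalso
            have hv : v₂ = u := by simpa using hphi.symm
            rw [hv] at hc₂
            exact hinlu_nq hc₂
          · cases t₁; cases t₂; rfl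
      have hesp : (p.mapGraph (phiMap u) hinc).edgeSet = p.edgeSet := by
        ext e
        rw [Multigraph.Walk.mem_edgeSet, Multigraph.Walk.edgeList_mapGraph,
          ← Multigraph.Walk.mem_edgeSet]
      have hesq : (q.mapGraph (phiMap u) hinc).edgeSet = q.edgeSet := by
        ext e
        rw [Multigraph.Walk.mem_edgeSet, Multigraph.Walk.edgeList_mapGraph,
          ← Multigraph.Walk.mem_edgeSet]
      have hCyc₁ : Ω.toMultigraph.IsCycleSet p.edgeSet :=
        ⟨_, p.mapGraph (phiMap u) hinc, hppc0, hesp⟩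
      have hCyc₂ : Ω.toMultigraph.IsCycleSet q.edgeSet :=
        ⟨_, q.mapGraph (phiMap u) hinc, hqqc0, hesq⟩
      have hnb₁ : ¬ Ω.Balanced p.edgeSet := by
        rw [hsign _ hCyc₁]
        have hc := hcount_eq p.edgeList hnodupE.1
        rw [hcntp] at hc
        intro h
        rw [show p.edgeSet ∩ Sg = {a | a ∈ p.edgeList} ∩ Sg from rfl, hc] at h
        simp at h
      have hnb₂ : ¬ Ω.Balanced q.edgeSet := by
        rw [hsign _ hCyc₂]
        have hc := hcount_eq q.edgeList hnodupE.2.1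
        rw [hcntq] at hc
        intro h
        rw [show q.edgeSet ∩ Sg = {a | a ∈ q.edgeList} ∩ Sg from rfl, hc] at h
        simp at h
      have hdisjS : Disjoint p.edgeSet q.edgeSet := by
        rw [Set.disjoint_left]
        intro e he₁ he₂
        exact hnodupE.2.2 _ he₁ _ he₂ rfl
      have hVV : Ω.toMultigraph.VSet p.edgeSet ∩ Ω.toMultigraph.VSet q.edgeSet
          = ({u} : Set V) := by
        apply Set.eq_singleton_iff_unique_mem.mpr
        constructor
        · constructor
          · obtain ⟨e, heL, heSg⟩ := List.countP_pos_iff.mp (by rw [hcntp]; omega)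
            simp only [decide_eq_true_eq] at heSg
            exact ⟨e, heL, hSg heSg⟩
          · obtain ⟨e, heL, heSg⟩ := List.countP_pos_iff.mp (by rw [hcntq]; omega)
            simp only [decide_eq_true_eq] at heSg
            exact ⟨e, heL, hSg heSg⟩
        · rintro v ⟨hv1, hv2⟩
          rw [VSet_phi hinc] at hv1 hv2
          obtain ⟨c₁, hc₁, hc₁eq⟩ := hv1
          obtain ⟨c₂, hc₂, hc₂eq⟩ := hv2
          have m₁ : c₁ ∈ p.vertList := Multigraph.Walk.VSet_subset_vertList p c₁ hc₁
          have m₂ : c₂ ∈ q.vertList := Multigraph.Walk.VSet_subset_vertList q c₂ hc₂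
          by_contra hvne
          have hc1' : c₁ = Sum.inl (phiMap u c₁) := phiMap_ne_u (by rw [hc₁eq]; exact hvne)
          have hc2' : c₂ = Sum.inl (phiMap u c₂) := phiMap_ne_u (by rw [hc₂eq]; exact hvne)
          have hceq : c₂ = c₁ := by rw [hc1', hc2', hc₁eq, hc₂eq]
          rw [hceq] at m₂ hc2'
          have hp1 : c₁ ∈ p.vertList.dropLast := by
            rw [hpstruct, List.mem_append] at m₁
            rcases m₁ with h | h
            · exact h
            · rw [List.mem_singleton] at h
              rw [h] at hc1'
              simp at hc1'
          have hq1 : c₁ ∈ q.vertList.dropLast := by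
            rw [hqstruct, List.mem_append] at m₂
            rcases m₂ with h | h
            · exact h
            · rw [List.mem_singleton] at h
              rw [h] at hc1'
              have : u = phiMap u c₁ := by
                rw [h]
                rfl
              rw [h] at hc₁eq
              exact absurd (by rw [← hc₁eq]; rfl) hvne
          exact hnodupV.2.2 _ hp1 _ hq1 rfl
      refine Or.inr (Or.inl ⟨p.edgeSet, q.edgeSet, ⟨hCyc₁, hnb₁⟩, ⟨hCyc₂, hnb₂⟩, hdisjS,
        ⟨u, hVV⟩, ?_⟩)
      rw [← hes', ← hspec, Multigraph.Walk.edgeSet_append]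
    · -- not both: balanced cycle
      have hel : (W.mapGraph (phiMap u) hinc).edgeList = W.edgeList :=
        Multigraph.Walk.edgeList_mapGraph _ hinc W
      have hvl : (W.mapGraph (phiMap u) hinc).vertList = W.vertList.map (phiMap u) :=
        Multigraph.Walk.vertList_mapGraph _ hinc W
      have hpwc : (W.mapGraph (phiMap u) hinc).IsCycle := by
        refine ⟨by rw [hel]; exact hWc.1, by rw [hel]; exact hWc.2.1, ?_⟩
        rw [hvl, ← list_map_dropLast]
        refine List.Nodup.map_on ?_ hWc.2.2
        intro c₁ hc₁ c₂ hc₂ hphi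
        have m₁ : c₁ ∈ W.vertList := (List.dropLast_sublist _).mem hc₁
        have m₂ : c₂ ∈ W.vertList := (List.dropLast_sublist _).mem hc₂
        rcases c₁ with v₁ | t₁ <;> rcases c₂ with v₂ | t₂
        · simpa using hphi
        · exfalso
          cases t₂
          have hv : v₁ = u := by simpa using hphi
          rw [hv] at m₁
          exact hboth ⟨m₁, m₂⟩
        · exfalso
          cases t₁
          have hv : v₂ = u := by simpa using hphi.symm
          rw [hv] at m₂
          exact hboth ⟨m₂, m₁⟩
        · cases t₁; cases t₂; rfl
      have hesum : (W.mapGraph (phiMap u) hinc).edgeSet = C := by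
        rw [← hWes]
        ext e
        rw [Multigraph.Walk.mem_edgeSet, hel, ← Multigraph.Walk.mem_edgeSet]
      have heven : Even (W.edgeList.countP (fun e => decide (e ∈ Sg))) := by
        rcases Classical.em ((Sum.inr () : V ⊕ Unit) ∈ W.vertList) with hinrv | hinrv
        · have hq := countSg_eq hshape hinrIff W
          have h1 : W.vertList.countP (fun c => decide (c = Sum.inr ()))
              = 1 + (if c0 = Sum.inr () then 1 else 0) := by
            conv_lhs => rw [Multigraph.Walk.vertList_eq_dropLast_append W]
            rw [List.countP_append, hWc.countP_dropLast_eq_one hinrv]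
            by_cases h : c0 = Sum.inr () <;> simp [h]
          rw [h1] at hq
          rw [Nat.even_iff]
          omega
        · have h0 : W.edgeList.countP (fun e => decide (e ∈ Sg)) = 0 := by
            rw [List.countP_eq_zero]
            intro e he
            simp only [decide_eq_true_eq]
            intro heS
            exact hinrv (Multigraph.Walk.mem_vertList_of_mem_inc W e _ he ((hinrIff e).mpr heS))
          rw [h0]
          exact Even.zero
      refine Or.inl ⟨⟨_, W.mapGraph (phiMap u) hinc, hpwc, hesum⟩, ?_⟩
      rw [hsign C ⟨_, W.mapGraph (phiMap u) hinc, hpwc, hesum⟩, ← hWes,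
        show W.edgeSet ∩ Sg = {a | a ∈ W.edgeList} ∩ Sg from rfl,
        hcount_eq W.edgeList hWc.2.1]
      exact heven
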